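/- Let n ≥ 2 and let G be a group with involutions g_1, ..., g_{2n} satisfying the braid relations g_i g_{i+1} g_i = g_{i+1} g_i g_{i+1} for i = 1, ..., 2n−1, the braid relation g_1 g_{2n} g_1 = g_{2n} g_1 g_{2n}, and [g_i, g_j] = 1 whenever i and j are not cyclically adjacent. Set γ_1 = g_3 g_4 ⋯ g_{2n} g_1, γ_{2n−1} = g_1 g_2 ⋯ g_{2n−1}, and γ_{2n} = g_2 g_3 ⋯ g_{2n}. Then γ_{2n−1} γ_1⁻¹ γ_{2n} = γ_{2n} γ_1⁻¹ γ_{2n−1} in G; equivalently γ_{2n−1} γ_1⁻¹ and γ_{2n} γ_1⁻¹ commute. -/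

import Mathlib

open scoped commutatorElement

def Pr {G : Type*} [Group G] (g : ℕ → G) (a L : ℕ) : G :=
  ((List.range L).map (fun k => g (k + a))).prod

lemma Pr_succ {G : Type*} [Group G] (g : ℕ → G) (a L : ℕ) :
    Pr g a (L + 1) = Pr g a L * g (L + a) := by
  simp [Pr, List.range_succ]

lemma Pr_front {G : Type*} [Group G] (g : ℕ → G) (a L : ℕ) :
    Pr g a (L + 1) = g a * Pr g (a + 1) L := by
  have h : ((fun k => g (k + a)) ∘ Nat.succ) = fun k => g (k + (a + 1)) := by
    funext k
    simp only [Function.comp_apply]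
    congr 1
    omega
  simp only [Pr, List.range_succ_eq_map, List.map_cons, List.prod_cons, List.map_map,
    Nat.zero_add, h]

lemma Pr_commute {G : Type*} [Group G] (g : ℕ → G) (a L : ℕ) (x : G)
    (h : ∀ k, k < L → Commute x (g (k + a))) : Commute x (Pr g a L) := by
  apply Commute.list_prod_right
  intro y hy
  simp only [List.mem_map, List.mem_range] at hy
  obtain ⟨k, hk, rfl⟩ := hy
  exact h k hk

lemma step_abstract {G : Type*} [Group G] (a b u : G) (hb : b * b = 1)
    (hua : u * a * u = a * u * a) (hab : a * b * a = b * a * b) (hbu : b * u = u * b) :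
    a * u * a * b * (a * u * a) = b * (a * u * a) * b := by
  calc a * u * a * b * (a * u * a)
      = a * u * (a * b * a) * (u * a) := by group
    _ = a * u * (b * a * b) * (u * a) := by rw [hab]
    _ = a * (u * b) * a * (b * u) * a := by group
    _ = a * (b * u) * a * (b * u) * a := by rw [hbu]
    _ = a * (b * u) * a * (u * b) * a := by rw [hbu]
    _ = a * b * (u * a * u) * (b * a) := by group
    _ = a * b * (a * u * a) * (b * a) := by rw [hua]
    _ = a * b * a * u * (a * b * a) := by group
    _ = b * a * b * u * (b * a * b) := by rw [hab]
    _ = b * a * ((b * u) * b) * (a * b) := by group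
    _ = b * a * ((u * b) * b) * (a * b) := by rw [hbu]
    _ = b * (a * u) * (b * b) * (a * b) := by group
    _ = b * (a * u) * 1 * (a * b) := by rw [hb]
    _ = b * (a * u * a) * b := by group

lemma main_abstract {G : Type*} [Group G] (x1 x2 xm X : G)
    (h1 : x1 * x1 = 1) (hm : xm * xm = 1)
    (b12 : x1 * x2 * x1 = x2 * x1 * x2)
    (b1m : x1 * xm * x1 = xm * x1 * xm)
    (c1X : x1 * X = X * x1)
    (hu : (X⁻¹ * x2 * X) * xm * (X⁻¹ * x2 * X) = xm * (X⁻¹ * x2 * X) * xm) :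
    (x1 * x2 * X) * (X * xm * x1)⁻¹ * (x2 * X * xm)
      = (x2 * X * xm) * (X * xm * x1)⁻¹ * (x1 * x2 * X) := by
  have e1inv : x1⁻¹ = x1 := inv_eq_of_mul_eq_one_right h1
  have eminv : xm⁻¹ = xm := inv_eq_of_mul_eq_one_right hm
  have einv : (X * xm * x1)⁻¹ = x1 * (xm * X⁻¹) := by
    rw [mul_inv_rev, mul_inv_rev, e1inv, eminv]
  have hc : Commute x1 X := c1X
  have c1Xi : x1 * X⁻¹ = X⁻¹ * x1 := hc.inv_right.eq
  have hW2eq : (X * xm * X⁻¹) * x2 * (X * xm * X⁻¹) = x2 * (X * xm * X⁻¹) * x2 := by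
    calc (X * xm * X⁻¹) * x2 * (X * xm * X⁻¹)
        = X * (xm * (X⁻¹ * x2 * X) * xm) * X⁻¹ := by group
      _ = X * ((X⁻¹ * x2 * X) * xm * (X⁻¹ * x2 * X)) * X⁻¹ := by rw [← hu]
      _ = x2 * (X * xm * X⁻¹) * x2 := by group
  have lhs_eq : (x1 * x2 * X) * (X * xm * x1)⁻¹ * (x2 * X * xm)
      = x2 * x1 * (X * xm * X⁻¹) * x2 * X := by
    calc (x1 * x2 * X) * (X * xm * x1)⁻¹ * (x2 * X * xm)
        = (x1 * x2 * X) * (x1 * (xm * X⁻¹)) * (x2 * X * xm) := by rw [einv]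
      _ = x1 * x2 * (X * x1) * (xm * (X⁻¹ * (x2 * (X * xm)))) := by group
      _ = x1 * x2 * (x1 * X) * (xm * (X⁻¹ * (x2 * (X * xm)))) := by rw [← c1X]
      _ = (x1 * x2 * x1) * (((X * xm * X⁻¹) * x2 * (X * xm * X⁻¹)) * X) := by group
      _ = (x1 * x2 * x1) * ((x2 * (X * xm * X⁻¹) * x2) * X) := by rw [hW2eq]
      _ = (x1 * (x2 * x1 * x2)) * ((X * xm * X⁻¹) * (x2 * X)) := by group
      _ = (x1 * (x1 * x2 * x1)) * ((X * xm * X⁻¹) * (x2 * X)) := by rw [← b12]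
      _ = (x1 * x1) * (x2 * (x1 * ((X * xm * X⁻¹) * (x2 * X)))) := by group
      _ = 1 * (x2 * (x1 * ((X * xm * X⁻¹) * (x2 * X)))) := by rw [h1]
      _ = x2 * x1 * (X * xm * X⁻¹) * x2 * X := by group
  have rhs_eq : (x2 * X * xm) * (X * xm * x1)⁻¹ * (x1 * x2 * X)
      = x2 * x1 * (X * xm * X⁻¹) * x2 * X := by
    calc (x2 * X * xm) * (X * xm * x1)⁻¹ * (x1 * x2 * X)
        = (x2 * X * xm) * (x1 * (xm * X⁻¹)) * (x1 * x2 * X) := by rw [einv]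
      _ = x2 * X * (xm * x1 * xm) * (X⁻¹ * (x1 * (x2 * X))) := by group
      _ = x2 * X * (x1 * xm * x1) * (X⁻¹ * (x1 * (x2 * X))) := by rw [← b1m]
      _ = x2 * (X * x1) * (xm * (x1 * X⁻¹)) * (x1 * (x2 * X)) := by group
      _ = x2 * (x1 * X) * (xm * (X⁻¹ * x1)) * (x1 * (x2 * X)) := by rw [← c1X, c1Xi]
      _ = x2 * (x1 * ((X * xm * X⁻¹) * ((x1 * x1) * (x2 * X)))) := by group
      _ = x2 * (x1 * ((X * xm * X⁻¹) * (1 * (x2 * X)))) := by rw [h1]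
      _ = x2 * x1 * (X * xm * X⁻¹) * x2 * X := by group
  exact lhs_eq.trans rhs_eq.symm

theorem stmt7 {G : Type*} [Group G] (n : ℕ) (hn : 2 ≤ n) (g : ℕ → G)
    (hsq : ∀ i, 1 ≤ i → i ≤ 2 * n → (g i) ^ 2 = 1)
    (hbr : ∀ i, 1 ≤ i → i ≤ 2 * n - 1 →
      g i * g (i + 1) * g i = g (i + 1) * g i * g (i + 1))
    (hbr1 : g 1 * g (2 * n) * g 1 = g (2 * n) * g 1 * g (2 * n))
    (hcomm : ∀ i j, 1 ≤ i → i ≤ 2 * n → 1 ≤ j → j ≤ 2 * n →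
      ¬(j = i + 1 ∨ i = j + 1 ∨ (i = 1 ∧ j = 2 * n) ∨ (i = 2 * n ∧ j = 1)) →
      ⁅g i, g j⁆ = 1) :
    letI γ₁ : G := ((List.range (2 * n - 2)).map (fun k => g (k + 3))).prod * g 1
    letI γa : G := ((List.range (2 * n - 1)).map (fun k => g (k + 1))).prod
    letI γb : G := ((List.range (2 * n - 1)).map (fun k => g (k + 2))).prod
    γa * γ₁⁻¹ * γb = γb * γ₁⁻¹ * γa := by
  obtain ⟨L, hL, hL1⟩ : ∃ L, 2 * n = L + 3 ∧ 1 ≤ L := ⟨2 * n - 3, by omega, by omega⟩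
  have e1 : 2 * n - 1 = L + 2 := by omega
  have e2 : 2 * n - 2 = L + 1 := by omega
  have hmul : ∀ i, 1 ≤ i → i ≤ L + 3 → g i * g i = 1 := by
    intro i h1 h2
    have := hsq i h1 (by omega)
    rwa [pow_two] at this
  have hinv : ∀ i, 1 ≤ i → i ≤ L + 3 → (g i)⁻¹ = g i := fun i h1 h2 =>
    inv_eq_of_mul_eq_one_right (hmul i h1 h2)
  have hcom : ∀ i j, 1 ≤ i → i + 2 ≤ j → j ≤ L + 3 → (i = 1 → j ≤ L + 2) →
      Commute (g i) (g j) := by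
    intro i j a b c d
    rw [← commutatorElement_eq_one_iff_commute]
    refine hcomm i j a (by omega) (by omega) (by omega) ?_
    rintro (h | h | ⟨h1, h2⟩ | ⟨h1, h2⟩) <;> omega
  have braidU : ∀ t, t ≤ L →
      ((Pr g 3 t)⁻¹ * g 2 * Pr g 3 t) * g (t + 3) * ((Pr g 3 t)⁻¹ * g 2 * Pr g 3 t)
        = g (t + 3) * ((Pr g 3 t)⁻¹ * g 2 * Pr g 3 t) * g (t + 3) := by
    intro t
    induction t with
    | zero => intro _; simpa [Pr] using hbr 2 (by omega) (by omega)
    | succ t ih =>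
      intro ht
      have hb : g (t + 4) * g (t + 4) = 1 := hmul _ (by omega) (by omega)
      have hab : g (t + 3) * g (t + 4) * g (t + 3) = g (t + 4) * g (t + 3) * g (t + 4) := by
        have h := hbr (t + 3) (by omega) (by omega)
        rwa [show t + 3 + 1 = t + 4 from by omega] at h
      have cbX : Commute (g (t + 4)) (Pr g 3 t) := by
        apply Pr_commute
        intro k hk
        exact (hcom (k + 3) (t + 4) (by omega) (by omega) (by omega) (by omega)).symm
      have cb2 : Commute (g (t + 4)) (g 2) :=
        (hcom 2 (t + 4) (by omega) (by omega) (by omega) (by omega)).symm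
      have hbu : g (t + 4) * ((Pr g 3 t)⁻¹ * g 2 * Pr g 3 t)
          = ((Pr g 3 t)⁻¹ * g 2 * Pr g 3 t) * g (t + 4) :=
        ((cbX.inv_right.mul_right cb2).mul_right cbX).eq
      have eu' : (Pr g 3 (t + 1))⁻¹ * g 2 * Pr g 3 (t + 1)
          = g (t + 3) * ((Pr g 3 t)⁻¹ * g 2 * Pr g 3 t) * g (t + 3) := by
        rw [Pr_succ, mul_inv_rev, hinv (t + 3) (by omega) (by omega)]
        group
      rw [show t + 1 + 3 = t + 4 from by omega, eu']
      exact step_abstract (g (t + 3)) (g (t + 4)) _ hb (ih (by omega)) hab hbu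
  have f2 : Pr g 2 (L + 1) = g 2 * Pr g 3 L := by simpa using Pr_front g 2 L
  have f1 : Pr g 1 (L + 1 + 1) = g 1 * Pr g 2 (L + 1) := by simpa using Pr_front g 1 (L + 1)
  have eA : Pr g 1 (L + 2) = g 1 * g 2 * Pr g 3 L := by
    rw [show L + 2 = L + 1 + 1 from by omega, f1, f2, ← mul_assoc]
  have f3 : Pr g 2 (L + 1 + 1) = Pr g 2 (L + 1) * g (L + 3) := by
    have h := Pr_succ g 2 (L + 1)
    rwa [show L + 1 + 2 = L + 3 from by omega] at h
  have eB : Pr g 2 (L + 2) = g 2 * Pr g 3 L * g (L + 3) := by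
    rw [show L + 2 = L + 1 + 1 from by omega, f3, f2]
  have eC : Pr g 3 (L + 1) = Pr g 3 L * g (L + 3) := Pr_succ g 3 L
  have hX1 : Commute (g 1) (Pr g 3 L) := by
    apply Pr_commute
    intro k hk
    exact hcom 1 (k + 3) (by omega) (by omega) (by omega) (by omega)
  have b1m : g 1 * g (L + 3) * g 1 = g (L + 3) * g 1 * g (L + 3) := by
    rwa [hL] at hbr1
  have b12 : g 1 * g 2 * g 1 = g 2 * g 1 * g 2 := by
    simpa using hbr 1 (by omega) (by omega)
  show Pr g 1 (2 * n - 1) * (Pr g 3 (2 * n - 2) * g 1)⁻¹ * Pr g 2 (2 * n - 1)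
      = Pr g 2 (2 * n - 1) * (Pr g 3 (2 * n - 2) * g 1)⁻¹ * Pr g 1 (2 * n - 1)
  rw [e1, e2, eA, eB, eC]
  exact main_abstract (g 1) (g 2) (g (L + 3)) (Pr g 3 L)
    (hmul 1 (by omega) (by omega)) (hmul (L + 3) (by omega) (by omega))
    b12 b1m hX1.eq (braidU L le_rfl)
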